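/- Let u_θ be an MLP with scalar input and output in which all hidden layers have the same width d (d₁ = ⋯ = d_L = d), with all biases equal to zero, and suppose the entries of the weight matrices W⁽¹⁾,…,W⁽ᴸ⁺¹⁾ are jointly independent square-integrable real random variables on a probability space, each with mean zero, where every entry of W⁽¹⁾ and of W⁽ᴸ⁺¹⁾ has variance 2/(d+1) and every entry of W⁽ˡ⁾ for 2 ≤ l ≤ L has variance 1/d. Assume σ : ℝ → ℝ is differentiable with measurable derivative satisfying |σ'(t)| ≤ 1 for all t ∈ ℝ. Then for every fixed x ∈ ℝ and every ε > 0, ℙ( |∂u_θ/∂x (x)| > ε ) ≤ 4/(d ε²). -/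

import Mathlib

open Matrix MeasureTheory ProbabilityTheory

/-- The pre-activation values `u⁽ˡ⁺¹⁾(x)` of an MLP with scalar input,
dimensions `d`, weights `W`, biases `b` and activation `σ`:
`u⁽¹⁾(x) = W⁽¹⁾ x + b⁽¹⁾` and `u⁽ˡ⁺¹⁾(x) = W⁽ˡ⁺¹⁾ σ(u⁽ˡ⁾(x)) + b⁽ˡ⁺¹⁾`.
Here `mlpPre d W b σ l` is `u⁽ˡ⁺¹⁾`, so `W l` is the weight matrix `W⁽ˡ⁺¹⁾`. -/
noncomputable def mlpPre (d : ℕ → ℕ)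
    (W : (l : ℕ) → Matrix (Fin (d (l + 1))) (Fin (d l)) ℝ)
    (b : (l : ℕ) → Fin (d (l + 1)) → ℝ) (σ : ℝ → ℝ) :
    (l : ℕ) → ℝ → Fin (d (l + 1)) → ℝ
  | 0, x => W 0 *ᵥ (fun _ => x) + b 0
  | l + 1, x => W (l + 1) *ᵥ (fun i => σ (mlpPre d W b σ l x i)) + b (l + 1)

noncomputable def mlpDeriv (d : ℕ → ℕ)
    (W : (l : ℕ) → Matrix (Fin (d (l + 1))) (Fin (d l)) ℝ)
    (b : (l : ℕ) → Fin (d (l + 1)) → ℝ) (σ : ℝ → ℝ) (x : ℝ) :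
    (l : ℕ) → Fin (d (l + 1)) → ℝ
  | 0 => fun i => ∑ j, W 0 i j
  | l + 1 => fun i => ∑ j, W (l + 1) i j *
      (deriv σ (mlpPre d W b σ l x j) * mlpDeriv d W b σ x l j)

lemma hasDerivAt_mlpPre (d : ℕ → ℕ)
    (W : (l : ℕ) → Matrix (Fin (d (l + 1))) (Fin (d l)) ℝ)
    (b : (l : ℕ) → Fin (d (l + 1)) → ℝ) {σ : ℝ → ℝ} (hσ : Differentiable ℝ σ)
    (x : ℝ) : ∀ l i, HasDerivAt (fun t => mlpPre d W b σ l t i)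
      (mlpDeriv d W b σ x l i) x := by
  intro l
  induction l with
  | zero =>
    intro i
    simp only [mlpPre, mlpDeriv, Matrix.mulVec, dotProduct, Pi.add_apply]
    have h := HasDerivAt.add_const (b 0 i) (HasDerivAt.fun_sum fun (j : Fin (d 0)) (_ : j ∈ Finset.univ) =>
      (hasDerivAt_id x).const_mul (W 0 i j))
    simpa using h
  | succ l ih =>
    intro i
    simp only [mlpPre, mlpDeriv, Matrix.mulVec, dotProduct, Pi.add_apply]
    have h := HasDerivAt.add_const (b (l+1) i) (HasDerivAt.fun_sum fun (j : Fin (d (l+1))) (_ : j ∈ Finset.univ) =>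
      ((((hσ _).hasDerivAt.comp x (ih j))).const_mul (W (l+1) i j)))
    simpa [mul_comm, mul_assoc, mul_left_comm] using h

lemma mlpPre_congr (d : ℕ → ℕ)
    {W W' : (l : ℕ) → Matrix (Fin (d (l + 1))) (Fin (d l)) ℝ}
    (b : (l : ℕ) → Fin (d (l + 1)) → ℝ) (σ : ℝ → ℝ) (x : ℝ) :
    ∀ l, (∀ l', l' ≤ l → W l' = W' l') →
      mlpPre d W b σ l x = mlpPre d W' b σ l x := by
  intro l
  induction l with
  | zero => intro h; simp [mlpPre, h 0 le_rfl]
  | succ l ih =>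
    intro h
    simp [mlpPre, h (l+1) le_rfl, ih (fun l' hl' => h l' (hl'.trans (Nat.le_succ l)))]

lemma mlpDeriv_congr (d : ℕ → ℕ)
    {W W' : (l : ℕ) → Matrix (Fin (d (l + 1))) (Fin (d l)) ℝ}
    (b : (l : ℕ) → Fin (d (l + 1)) → ℝ) (σ : ℝ → ℝ) (x : ℝ) :
    ∀ l, (∀ l', l' ≤ l → W l' = W' l') →
      mlpDeriv d W b σ x l = mlpDeriv d W' b σ x l := by
  intro l
  induction l with
  | zero => intro h; simp [mlpDeriv, h 0 le_rfl]
  | succ l ih =>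
    intro h
    have h' : ∀ l', l' ≤ l → W l' = W' l' := fun l' hl' => h l' (hl'.trans (Nat.le_succ l))
    simp [mlpDeriv, h (l+1) le_rfl, ih h', mlpPre_congr d b σ x l h']

lemma measurable_mlp {α : Type*} [MeasurableSpace α] (d : ℕ → ℕ)
    (V : (l : ℕ) → α → Matrix (Fin (d (l + 1))) (Fin (d l)) ℝ)
    (hV : ∀ l i j, Measurable fun a => V l a i j)
    (b : (l : ℕ) → Fin (d (l + 1)) → ℝ) {σ : ℝ → ℝ}
    (hσc : Continuous σ) (hσ' : Measurable (deriv σ)) (x : ℝ) :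
    ∀ l, (∀ j, Measurable fun a => mlpPre d (fun l' => V l' a) b σ l x j) ∧
      (∀ j, Measurable fun a => mlpDeriv d (fun l' => V l' a) b σ x l j) := by
  intro l
  induction l with
  | zero =>
    constructor
    · intro j
      simp only [mlpPre, Matrix.mulVec, dotProduct, Pi.add_apply]
      exact (Finset.measurable_sum _ fun k _ => ((hV 0 j k).mul_const x)).add_const _
    · intro j
      simp only [mlpDeriv]
      exact Finset.measurable_sum _ fun k _ => hV 0 j k
  | succ l ih =>
    constructor
    · intro j
      simp only [mlpPre, Matrix.mulVec, dotProduct, Pi.add_apply]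
      exact (Finset.measurable_sum _ fun k _ =>
        ((hV (l+1) j k).mul (hσc.measurable.comp (ih.1 k)))).add_const _
    · intro j
      simp only [mlpDeriv]
      exact Finset.measurable_sum _ fun k _ =>
        (hV (l+1) j k).mul ((hσ'.comp (ih.1 k)).mul (ih.2 k))

lemma abs_mul_le_half (a b : ℝ) : |a * b| ≤ ((a)^2 + (b)^2)/2 := by
  rw [abs_mul]
  nlinarith [sq_nonneg (|a| - |b|), sq_abs a, sq_abs b, abs_nonneg a, abs_nonneg b]

lemma key_second_moment {Ω : Type*} [MeasurableSpace Ω] (μ : Measure Ω) [IsProbabilityMeasure μ]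
    {n n' : ℕ} (A : Ω → Fin n' → Fin n → ℝ) (Y : Ω → Fin n → ℝ) (v : ℝ)
    (hAmeas : ∀ i j, Measurable fun ω => A ω i j)
    (hA2 : ∀ i j, MemLp (fun ω => A ω i j) 2 μ)
    (hAmean : ∀ i j, ∫ ω, A ω i j ∂μ = 0)
    (hAsq : ∀ i j, ∫ ω, (A ω i j)^2 ∂μ = v)
    (hYmeas : ∀ j, Measurable fun ω => Y ω j)
    (hY2 : ∀ j, MemLp (fun ω => Y ω j) 2 μ)
    (hind1 : ∀ i j k k', IndepFun (fun ω => A ω i j) (fun ω => Y ω k * Y ω k') μ)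
    (hind2 : ∀ i j j', j ≠ j' →
      IndepFun (fun ω => A ω i j) (fun ω => A ω i j' * (Y ω j * Y ω j')) μ)
    (i : Fin n') :
    MemLp (fun ω => ∑ j, A ω i j * Y ω j) 2 μ ∧
      ∫ ω, (∑ j, A ω i j * Y ω j)^2 ∂μ = v * ∑ j, ∫ ω, (Y ω j)^2 ∂μ := by
  have hYYint : ∀ k k', Integrable (fun ω => Y ω k * Y ω k') μ := by
    intro k k'
    refine Integrable.mono' (((hY2 k).integrable_sq.add (hY2 k').integrable_sq).div_const 2)
      (((hYmeas k).mul (hYmeas k')).aestronglyMeasurable) (Filter.Eventually.of_forall fun ω => ?_)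
    rw [Real.norm_eq_abs]
    exact abs_mul_le_half (Y ω k) (Y ω k')
  have hdiagindep : ∀ j, IndepFun (fun ω => (A ω i j)^2) (fun ω => Y ω j * Y ω j) μ :=
    fun j => (hind1 i j j j).comp (measurable_id.pow_const 2) measurable_id
  have hdiagInt : ∀ j, Integrable (fun ω => (A ω i j * Y ω j)^2) μ := by
    intro j
    have h2 := (hdiagindep j).integrable_mul (hA2 i j).integrable_sq (hYYint j j)
    have : (fun ω => (A ω i j * Y ω j)^2)
        = (fun ω => (A ω i j)^2) * (fun ω => Y ω j * Y ω j) := by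
      funext ω; simp [mul_pow, sq]; ring
    rwa [this]
  have hAYY : ∀ j j' k, Integrable (fun ω => A ω i j * (Y ω k * Y ω j')) μ := fun j j' k =>
    (hind1 i j k j').integrable_mul ((hA2 i j).integrable one_le_two) (hYYint k j')
  have hterm : ∀ j j', Integrable (fun ω => (A ω i j * Y ω j) * (A ω i j' * Y ω j')) μ := by
    intro j j'
    rcases eq_or_ne j j' with rfl | hne
    · have := hdiagInt j
      have e : (fun ω => (A ω i j * Y ω j) * (A ω i j * Y ω j))
          = fun ω => (A ω i j * Y ω j)^2 := by funext ω; ring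
      rwa [e]
    · have h := (hind2 i j j' hne).integrable_mul ((hA2 i j).integrable one_le_two)
        (hAYY j' j' j)
      have e : (fun ω => (A ω i j * Y ω j) * (A ω i j' * Y ω j'))
          = fun ω => A ω i j * (A ω i j' * (Y ω j * Y ω j')) := by funext ω; ring
      rwa [e]
  have hmemterm : ∀ j, MemLp (fun ω => A ω i j * Y ω j) 2 μ := fun j =>
    (memLp_two_iff_integrable_sq
      (((hAmeas i j).mul (hYmeas j)).aestronglyMeasurable)).2 (hdiagInt j)
  constructor
  · have := memLp_finset_sum (μ := μ) (Finset.univ : Finset (Fin n))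
      (f := fun j ω => A ω i j * Y ω j) (fun j _ => hmemterm j)
    convert this using 1
  · have hcross0 : ∀ j j', j ≠ j' →
        ∫ ω, (A ω i j * Y ω j) * (A ω i j' * Y ω j') ∂μ = 0 := by
      intro j j' hne
      have e : (fun ω => (A ω i j * Y ω j) * (A ω i j' * Y ω j'))
          = fun ω => A ω i j * (A ω i j' * (Y ω j * Y ω j')) := by funext ω; ring
      rw [e]
      have h : ∫ ω, A ω i j * (A ω i j' * (Y ω j * Y ω j')) ∂μ
          = (∫ ω, A ω i j ∂μ) * ∫ ω, A ω i j' * (Y ω j * Y ω j') ∂μ :=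
        (hind2 i j j' hne).integral_fun_mul_eq_mul_integral
          ((hA2 i j).integrable one_le_two).aestronglyMeasurable (hAYY j' j' j).aestronglyMeasurable
      rw [h, hAmean i j, zero_mul]
    have hdiagval : ∀ j, ∫ ω, (A ω i j * Y ω j)^2 ∂μ = v * ∫ ω, (Y ω j)^2 ∂μ := by
      intro j
      have e : (fun ω => (A ω i j * Y ω j)^2)
          = fun ω => (A ω i j)^2 * (Y ω j * Y ω j) := by funext ω; ring
      rw [e]
      have h : ∫ ω, (A ω i j)^2 * (Y ω j * Y ω j) ∂μ
          = (∫ ω, (A ω i j)^2 ∂μ) * ∫ ω, Y ω j * Y ω j ∂μ :=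
        (hdiagindep j).integral_fun_mul_eq_mul_integral (hA2 i j).integrable_sq.aestronglyMeasurable (hYYint j j).aestronglyMeasurable
      rw [h, hAsq i j]
      congr 1
      simp [sq]
    have expand : (fun ω => (∑ j, A ω i j * Y ω j)^2)
        = fun ω => ∑ j, ∑ j', (A ω i j * Y ω j) * (A ω i j' * Y ω j') := by
      funext ω; rw [sq, Finset.sum_mul_sum]
    rw [expand, integral_finset_sum _ (fun j _ => integrable_finset_sum _ (fun j' _ => hterm j j'))]
    rw [Finset.mul_sum]
    refine Finset.sum_congr rfl fun j _ => ?_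
    rw [integral_finset_sum _ (fun j' _ => hterm j j')]
    rw [Finset.sum_eq_single j (fun j' _ hne => hcross0 j j' (Ne.symm hne)) (by simp)]
    have e : (fun ω => (A ω i j * Y ω j) * (A ω i j * Y ω j))
        = fun ω => (A ω i j * Y ω j)^2 := by funext ω; ring
    rw [e, hdiagval j]
/-- For a randomly initialized MLP with scalar input and output,
hidden widths all equal to `m`, zero biases, jointly independent mean-zero
square-integrable weight entries with Glorot variances (`2/(m+1)` for the first and last
layers, `1/m` for the middle layers), and a differentiable activation `σ` with measurable
derivative bounded by `1`, for every `ε > 0` one has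
`ℙ(|∂u_θ/∂x (x)| > ε) ≤ 4 / (m ε²)`. -/
theorem prob_mlp_deriv_gt_le
    {Ω : Type*} [MeasurableSpace Ω] (μ : Measure Ω) [IsProbabilityMeasure μ]
    (L m : ℕ) (hL : 1 ≤ L) (hm : 1 ≤ m)
    (d : ℕ → ℕ) (h0 : d 0 = 1) (hdL : d (L + 1) = 1)
    (hdm : ∀ l, 1 ≤ l → l ≤ L → d l = m)
    (W : (l : ℕ) → Ω → Matrix (Fin (d (l + 1))) (Fin (d l)) ℝ)
    (hWmeas : ∀ l i j, Measurable fun ω => W l ω i j)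
    (hWL2 : ∀ l i j, MemLp (fun ω => W l ω i j) 2 μ)
    (hWindep : iIndepFun
      (fun p : (l : Fin (L + 1)) × (Fin (d (l.1 + 1)) × Fin (d l.1)) =>
        fun ω => W p.1 ω p.2.1 p.2.2) μ)
    (hWmean : ∀ l, l ≤ L → ∀ i j, ∫ ω, W l ω i j ∂μ = 0)
    (hvarFirst : ∀ i j, variance (fun ω => W 0 ω i j) μ = 2 / (m + 1))
    (hvarLast : ∀ i j, variance (fun ω => W L ω i j) μ = 2 / (m + 1))
    (hvarMid : ∀ l, 1 ≤ l → l < L → ∀ i j, variance (fun ω => W l ω i j) μ = 1 / m)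
    (σ : ℝ → ℝ) (hσ : Differentiable ℝ σ)
    (hσ' : Measurable (deriv σ)) (hσbound : ∀ t, |deriv σ t| ≤ 1)
    (x : ℝ) (i : Fin (d (L + 1))) (ε : ℝ) (hε : 0 < ε) :
    μ {ω | ε < |deriv (fun t => mlpPre d (fun l => W l ω) (fun _ => 0) σ L t i) x|}
      ≤ ENNReal.ofReal (4 / (m * ε ^ 2)) := by
  classical
  obtain ⟨L', rfl⟩ : ∃ L', L = L' + 1 := ⟨L - 1, by omega⟩
  have hm' : (1 : ℝ) ≤ (m : ℝ) := by exact_mod_cast hm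
  have hm0 : (0 : ℝ) < (m : ℝ) := by linarith
  -- rewrite the derivative
  have hDeriv : ∀ ω, deriv (fun t => mlpPre d (fun l => W l ω) (fun _ => 0) σ (L' + 1) t i) x
      = mlpDeriv d (fun l => W l ω) (fun _ => 0) σ x (L' + 1) i :=
    fun ω => (hasDerivAt_mlpPre d (fun l => W l ω) (fun _ => 0) hσ x (L' + 1) i).deriv
  -- abbreviations
  set X : (l : ℕ) → Ω → Fin (d (l + 1)) → ℝ :=
    fun l ω => mlpDeriv d (fun l' => W l' ω) (fun _ => 0) σ x l with hXdef
  set U : (l : ℕ) → Ω → Fin (d (l + 1)) → ℝ :=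
    fun l ω => mlpPre d (fun l' => W l' ω) (fun _ => 0) σ l x with hUdef
  set Yf : (l : ℕ) → Ω → Fin (d (l + 1)) → ℝ :=
    fun l ω j => deriv σ (U l ω j) * X l ω j with hYdef
  -- measurability over Ω
  have hUmeas : ∀ l j, Measurable fun ω => U l ω j := fun l =>
    (measurable_mlp d (fun l ω => W l ω) hWmeas (fun _ => 0) hσ.continuous hσ' x l).1
  have hXmeas : ∀ l j, Measurable fun ω => X l ω j := fun l =>
    (measurable_mlp d (fun l ω => W l ω) hWmeas (fun _ => 0) hσ.continuous hσ' x l).2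
  have hYmeas : ∀ l j, Measurable fun ω => Yf l ω j := fun l j =>
    (hσ'.comp (hUmeas l j)).mul (hXmeas l j)
  -- index type and coordinate functions
  set ι := (l : Fin ((L' + 1) + 1)) × (Fin (d (l.1 + 1)) × Fin (d l.1)) with hι
  set f : ι → Ω → ℝ := fun p ω => W p.1 ω p.2.1 p.2.2 with hf
  have hfmeas : ∀ p, Measurable (f p) := fun p => hWmeas p.1 p.2.1 p.2.2
  set T : ℕ → Finset ι := fun l => Finset.univ.filter (fun p => (p.1 : ℕ) ≤ l) with hT
  set recon : (l : ℕ) → l ≤ (L' + 1) → ((T l) → ℝ) →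
      ∀ l'', Matrix (Fin (d (l'' + 1))) (Fin (d l'')) ℝ :=
    fun l hl v l'' i j =>
      if h : l'' ≤ l then
        v ⟨⟨⟨l'', by omega⟩, (i, j)⟩,
          by simp only [hT, Finset.mem_filter, Finset.mem_univ, true_and]; exact h⟩
      else 0 with hrecon
  have hrecon_meas : ∀ (l) (hl : l ≤ (L' + 1)) (l'') (i : Fin (d (l'' + 1))) (j : Fin (d l'')),
      Measurable fun v => recon l hl v l'' i j := by
    intro l hl l'' i j
    by_cases h : l'' ≤ l
    · simp only [hrecon, dif_pos h]
      exact measurable_pi_apply _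
    · simp only [hrecon, dif_neg h]
      exact measurable_const
  have hrecon_agree : ∀ (l) (hl : l ≤ (L' + 1)) (ω) (l''), l'' ≤ l →
      recon l hl (fun q => f q ω) l'' = W l'' ω := by
    intro l hl ω l'' h
    funext i j
    simp only [hrecon, dif_pos h]
    rfl
  -- the independence helper
  have hindep_single : ∀ (p : ι) (S : Finset ι), p ∉ S →
      ∀ g : (S → ℝ) → ℝ, Measurable g →
      IndepFun (f p) (fun ω => g fun q => f q ω) μ := by
    intro p S hp g hg
    have h := hWindep.indepFun_finset {p} S (Finset.disjoint_singleton_left.mpr hp) hfmeas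
    exact h.comp (φ := fun v : (({p} : Finset ι)) → ℝ => v ⟨p, Finset.mem_singleton_self p⟩)
      (ψ := g) (measurable_pi_apply _) hg
  -- factorization of Yf-products through layers ≤ l
  have hYYfact : ∀ (l) (hl : l ≤ (L' + 1)) (k k' : Fin (d (l + 1))),
      ∃ g : ((T l) → ℝ) → ℝ, Measurable g ∧
        ∀ ω, Yf l ω k * Yf l ω k' = g fun q => f q ω := by
    intro l hl k k'
    refine ⟨fun v =>
      (deriv σ (mlpPre d (recon l hl v) (fun _ => 0) σ l x k) *
        mlpDeriv d (recon l hl v) (fun _ => 0) σ x l k) *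
      (deriv σ (mlpPre d (recon l hl v) (fun _ => 0) σ l x k') *
        mlpDeriv d (recon l hl v) (fun _ => 0) σ x l k'), ?_, ?_⟩
    · have hmm := measurable_mlp d (fun l'' v => recon l hl v l'') (hrecon_meas l hl)
        (fun _ => 0) hσ.continuous hσ' x l
      exact ((hσ'.comp (hmm.1 k)).mul (hmm.2 k)).mul ((hσ'.comp (hmm.1 k')).mul (hmm.2 k'))
    · intro ω
      have hag : ∀ l'', l'' ≤ l → (fun l' => recon l hl (fun q => f q ω) l') l''
          = (fun l' => W l' ω) l'' := fun l'' h => hrecon_agree l hl ω l'' h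
      simp only [hYdef, hXdef, hUdef,
        mlpPre_congr d (fun _ => 0) σ x l hag, mlpDeriv_congr d (fun _ => 0) σ x l hag]
  -- independence for the layer recursion
  have hind1' : ∀ (l), l + 1 ≤ (L' + 1) → ∀ (i : Fin (d (l + 2))) (jj : Fin (d (l + 1)))
      (k k' : Fin (d (l + 1))),
      IndepFun (fun ω => W (l + 1) ω i jj) (fun ω => Yf l ω k * Yf l ω k') μ := by
    intro l hl i jj k k'
    obtain ⟨g, hg, hgeq⟩ := hYYfact l (by omega) k k'
    have hp : (⟨⟨l + 1, by omega⟩, (i, jj)⟩ : ι) ∉ T l := by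
      simp [hT]
    have h := hindep_single _ _ hp g hg
    have he : (fun ω => Yf l ω k * Yf l ω k') = fun ω => g fun q => f q ω := funext hgeq
    rw [he]
    exact h
  have hind2' : ∀ (l), l + 1 ≤ (L' + 1) → ∀ (i : Fin (d (l + 2))) (j j' : Fin (d (l + 1))), j ≠ j' →
      IndepFun (fun ω => W (l + 1) ω i j)
        (fun ω => W (l + 1) ω i j' * (Yf l ω j * Yf l ω j')) μ := by
    intro l hl i j j' hne
    obtain ⟨g, hg, hgeq⟩ := hYYfact l (by omega) j j'
    set p : ι := ⟨⟨l + 1, by omega⟩, (i, j)⟩ with hpdef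
    set p' : ι := ⟨⟨l + 1, by omega⟩, (i, j')⟩ with hp'def
    set S : Finset ι := insert p' (T l) with hSdef
    have hpS : p ∉ S := by
      simp only [hSdef, Finset.mem_insert, hT, Finset.mem_filter, Finset.mem_univ, true_and]
      push_neg
      refine ⟨?_, by simp [hpdef]⟩
      intro a
      have h2 := (Sigma.mk.inj_iff.mp a).2
      exact hne (congrArg Prod.snd (eq_of_heq h2))
    have h := hindep_single p S hpS
      (fun v => v ⟨p', Finset.mem_insert_self _ _⟩ *
        g fun q => v ⟨q.1, Finset.mem_insert_of_mem q.2⟩)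
      ((measurable_pi_apply _).mul
        (hg.comp (measurable_pi_lambda _ fun q => measurable_pi_apply _)))
    have he : (fun ω => W (l + 1) ω i j' * (Yf l ω j * Yf l ω j'))
        = fun ω => f p' ω * g fun q => f q ω := by
      funext ω
      rw [hgeq ω]
    rw [he]
    exact h
  -- second moments of the weights
  have hWsq : ∀ l, l ≤ (L' + 1) → ∀ i j,
      ∫ ω, (W l ω i j) ^ 2 ∂μ = variance (fun ω => W l ω i j) μ := by
    intro l hl i j
    have h := variance_eq_sub (hWL2 l i j)
    rw [hWmean l hl i j] at h
    simpa using h.symm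
  -- the layer step
  have step : ∀ (l), l + 1 ≤ L' + 1 →
      ∀ v : ℝ, 0 ≤ v →
      (∀ (i : Fin (d (l + 2))) (j : Fin (d (l + 1))), ∫ ω, (W (l + 1) ω i j) ^ 2 ∂μ = v) →
      (∀ j, MemLp (fun ω => X l ω j) 2 μ) →
      ∀ i : Fin (d (l + 2)), MemLp (fun ω => X (l + 1) ω i) 2 μ ∧
        ∫ ω, (X (l + 1) ω i) ^ 2 ∂μ ≤ v * ∑ j, ∫ ω, (X l ω j) ^ 2 ∂μ := by
    intro l hl v hv hWsq' hX2 i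
    have hY2 : ∀ j, MemLp (fun ω => Yf l ω j) 2 μ := by
      intro j
      refine (hX2 j).of_le ((hYmeas l j).aestronglyMeasurable)
        (Filter.Eventually.of_forall fun ω => ?_)
      simp only [Real.norm_eq_abs, hYdef, abs_mul]
      have h1 := hσbound (U l ω j)
      have h2 := abs_nonneg (X l ω j)
      nlinarith [abs_nonneg (deriv σ (U l ω j))]
    have hkey := key_second_moment μ (fun ω i j => W (l + 1) ω i j) (fun ω j => Yf l ω j) v
      (fun i j => hWmeas _ i j) (fun i j => hWL2 _ i j)
      (fun i j => hWmean _ (by omega) i j) hWsq' (hYmeas l) hY2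
      (fun i jj k k' => hind1' l hl i jj k k')
      (fun i j j' hne => hind2' l hl i j j' hne) i
    have hEqp : ∀ ω, X (l + 1) ω i = ∑ j, W (l + 1) ω i j * Yf l ω j := by
      intro ω
      simp only [hXdef, hYdef, hUdef, mlpDeriv]
    constructor
    · have he : (fun ω => X (l + 1) ω i) = fun ω => ∑ j, W (l + 1) ω i j * Yf l ω j :=
        funext hEqp
      rw [he]
      exact hkey.1
    · have he : ∫ ω, (X (l + 1) ω i) ^ 2 ∂μ = v * ∑ j, ∫ ω, (Yf l ω j) ^ 2 ∂μ := by
        simp only [hEqp]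
        exact hkey.2
      rw [he]
      refine mul_le_mul_of_nonneg_left (Finset.sum_le_sum fun j _ => ?_) hv
      refine integral_mono (hY2 j).integrable_sq (hX2 j).integrable_sq fun ω => ?_
      have hd1 : (deriv σ (U l ω j)) ^ 2 ≤ 1 := by
        have := hσbound (U l ω j)
        nlinarith [abs_nonneg (deriv σ (U l ω j)), sq_abs (deriv σ (U l ω j))]
      calc (Yf l ω j) ^ 2 = (deriv σ (U l ω j)) ^ 2 * (X l ω j) ^ 2 := by
            simp only [hYdef]; ring
        _ ≤ 1 * (X l ω j) ^ 2 := mul_le_mul_of_nonneg_right hd1 (sq_nonneg _)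
        _ = (X l ω j) ^ 2 := one_mul _
  -- base case
  have base : ∀ j : Fin (d 1), MemLp (fun ω => X 0 ω j) 2 μ ∧
      ∫ ω, (X 0 ω j) ^ 2 ∂μ = (2 / ((m : ℝ) + 1)) * (d 0 : ℝ) := by
    intro j
    have hkey := key_second_moment μ (fun ω i jj => W 0 ω i jj)
      (fun (_ : Ω) (_ : Fin (d 0)) => (1 : ℝ)) (2 / ((m : ℝ) + 1))
      (fun i jj => hWmeas 0 i jj) (fun i jj => hWL2 0 i jj)
      (fun i jj => hWmean 0 (by omega) i jj)
      (fun i jj => by rw [hWsq 0 (by omega) i jj]; exact hvarFirst i jj)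
      (fun _ => measurable_const) (fun _ => memLp_const 1)
      (fun i jj k k' => hindep_single ⟨⟨0, by omega⟩, (i, jj)⟩ ∅ (Finset.notMem_empty _)
        (fun _ => (1 : ℝ) * 1) measurable_const)
      (fun i jj jj' hne => by
        have hpne : (⟨⟨0, by omega⟩, (i, jj)⟩ : ι) ≠ ⟨⟨0, by omega⟩, (i, jj')⟩ := by
          intro a
          exact hne (congrArg Prod.snd (eq_of_heq (Sigma.mk.inj_iff.mp a).2))
        exact (hWindep.indepFun hpne).comp measurable_id
          (measurable_id.mul_const ((1 : ℝ) * 1))) j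
    have hEqp : ∀ ω, X 0 ω j = ∑ jj, W 0 ω j jj * (1 : ℝ) := by
      intro ω
      simp only [hXdef, mlpDeriv, mul_one]
    constructor
    · have he : (fun ω => X 0 ω j) = fun ω => ∑ jj, W 0 ω j jj * (1 : ℝ) := funext hEqp
      rw [he]
      exact hkey.1
    · have he : ∫ ω, (X 0 ω j) ^ 2 ∂μ
          = (2 / ((m : ℝ) + 1)) * ∑ jj : Fin (d 0), ∫ (_ : Ω), (1 : ℝ) ^ 2 ∂μ := by
        simp only [hEqp]
        exact hkey.2
      rw [he]
      simp [Finset.card_univ]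
  -- the recursive bound for layers 0..L'
  have ind : ∀ l, l + 1 ≤ L' + 1 → (∀ j, MemLp (fun ω => X l ω j) 2 μ) ∧
      ∑ j, ∫ ω, (X l ω j) ^ 2 ∂μ ≤ (m : ℝ) * (2 / ((m : ℝ) + 1)) := by
    intro l
    induction l with
    | zero =>
      intro _
      refine ⟨fun j => (base j).1, ?_⟩
      have hd1 : d 1 = m := hdm 1 le_rfl (by omega)
      apply le_of_eq
      calc ∑ j, ∫ ω, (X 0 ω j) ^ 2 ∂μ
          = ∑ _j : Fin (d 1), (2 / ((m : ℝ) + 1)) * (d 0 : ℝ) :=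
            Finset.sum_congr rfl fun j _ => (base j).2
        _ = (d 1 : ℝ) * ((2 / ((m : ℝ) + 1)) * (d 0 : ℝ)) := by
            simp [Finset.card_univ, mul_comm]
        _ = (m : ℝ) * (2 / ((m : ℝ) + 1)) := by rw [hd1, h0]; push_cast; ring
    | succ l ih =>
      intro hl
      have prev := ih (by omega)
      have st := step l (by omega) (1 / (m : ℝ)) (by positivity)
        (fun i j => by
          rw [hWsq (l + 1) (by omega) i j]
          exact hvarMid (l + 1) (by omega) (by omega) i j) prev.1
      refine ⟨fun i => (st i).1, ?_⟩
      have hd2 : d (l + 2) = m := hdm (l + 2) (by omega) (by omega)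
      calc ∑ i, ∫ ω, (X (l + 1) ω i) ^ 2 ∂μ
          ≤ ∑ _i : Fin (d (l + 2)), (1 / (m : ℝ)) * ∑ j, ∫ ω, (X l ω j) ^ 2 ∂μ :=
            Finset.sum_le_sum fun i _ => (st i).2
        _ = (d (l + 2) : ℝ) * ((1 / (m : ℝ)) * ∑ j, ∫ ω, (X l ω j) ^ 2 ∂μ) := by
            simp [Finset.card_univ, mul_comm]
        _ = ∑ j, ∫ ω, (X l ω j) ^ 2 ∂μ := by
            rw [hd2, ← mul_assoc, mul_one_div, div_self hm0.ne', one_mul]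
        _ ≤ (m : ℝ) * (2 / ((m : ℝ) + 1)) := prev.2
  -- final layer
  obtain ⟨hDmem, hDbound⟩ := step L' le_rfl (2 / ((m : ℝ) + 1)) (by positivity)
    (fun i j => by
      rw [hWsq (L' + 1) le_rfl i j]
      exact hvarLast i j) (ind L' le_rfl).1 i
  have hI : ∫ ω, (X (L' + 1) ω i) ^ 2 ∂μ ≤ 4 / (m : ℝ) := by
    have h1 : ∫ ω, (X (L' + 1) ω i) ^ 2 ∂μ
        ≤ (2 / ((m : ℝ) + 1)) * ((m : ℝ) * (2 / ((m : ℝ) + 1))) :=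
      hDbound.trans (mul_le_mul_of_nonneg_left (ind L' le_rfl).2 (by positivity))
    refine h1.trans ?_
    have h2 : (2 / ((m : ℝ) + 1)) * ((m : ℝ) * (2 / ((m : ℝ) + 1)))
        = 4 * (m : ℝ) / (((m : ℝ) + 1) ^ 2) := by
      field_simp
      ring
    rw [h2, div_le_div_iff₀ (by positivity) hm0]
    nlinarith
  -- Markov's inequality
  have hsetEq : {ω | ε < |deriv (fun t =>
        mlpPre d (fun l => W l ω) (fun _ => 0) σ (L' + 1) t i) x|}
      = {ω | ε < |X (L' + 1) ω i|} := by
    ext ω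
    simp only [Set.mem_setOf_eq, hDeriv ω, hXdef]
  rw [hsetEq]
  have hsub : {ω | ε < |X (L' + 1) ω i|} ⊆ {ω | ε ^ 2 ≤ (X (L' + 1) ω i) ^ 2} := by
    intro ω hω
    simp only [Set.mem_setOf_eq] at *
    nlinarith [abs_nonneg (X (L' + 1) ω i), sq_abs (X (L' + 1) ω i)]
  refine le_trans (measure_mono hsub) ?_
  have hmar := mul_meas_ge_le_integral_of_nonneg (μ := μ)
    (f := fun ω => (X (L' + 1) ω i) ^ 2)
    (Filter.Eventually.of_forall fun ω => sq_nonneg _) hDmem.integrable_sq (ε ^ 2)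
  have htr : (μ {ω | ε ^ 2 ≤ (X (L' + 1) ω i) ^ 2}).toReal ≤ 4 / ((m : ℝ) * ε ^ 2) := by
    have hε2 : (0 : ℝ) < ε ^ 2 := by positivity
    rw [le_div_iff₀ (by positivity)]
    have h4 : ε ^ 2 * (μ {ω | ε ^ 2 ≤ (X (L' + 1) ω i) ^ 2}).toReal * (m : ℝ)
        ≤ (4 / (m : ℝ)) * (m : ℝ) :=
      mul_le_mul_of_nonneg_right (hmar.trans hI) hm0.le
    rw [div_mul_cancel₀ _ hm0.ne'] at h4
    nlinarith [h4]
  calc μ {ω | ε ^ 2 ≤ (X (L' + 1) ω i) ^ 2}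
      = ENNReal.ofReal (μ {ω | ε ^ 2 ≤ (X (L' + 1) ω i) ^ 2}).toReal :=
        (ENNReal.ofReal_toReal (measure_ne_top μ _)).symm
    _ ≤ ENNReal.ofReal (4 / ((m : ℝ) * ε ^ 2)) := ENNReal.ofReal_le_ofReal htr
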